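/- Suppose dim M ≥ 3, ω is a 1-form, and θ(X,Y) = ω(X)Y + ω(Y)X (the deformation tensor of a projective transformation of ∇). Then d_KV θ = 0 if and only if ∇ω = 0. -/

import Mathlib

set_option linter.unusedVariables false

/-- KV differential of a 2-cochain:
`(d_KV θ)(X,Y,Z) = (∇_Y θ)(X,Z) - (∇_X θ)(Y,Z) + ∇_{θ(X,Y)-θ(Y,X)} Z`. -/
def dKV2 {V : Type*} [AddCommGroup V] (nabla : V → V → V) (θ : V → V → V) (X Y Z : V) : V :=
  (nabla Y (θ X Z) - θ (nabla Y X) Z - θ X (nabla Y Z))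
    - (nabla X (θ Y Z) - θ (nabla X Y) Z - θ Y (nabla X Z))
    + nabla (θ X Y - θ Y X) Z

/-- if `dim M ≥ 3`, `ω` a 1-form and `θ(X,Y) = ω(X)Y + ω(Y)X`, then
`d_KV θ = 0` iff `∇ω = 0`. -/
theorem stmt_8
    (R : Type*) [CommRing R] [Algebra ℝ R]
    (nabla : Derivation ℝ R R → Derivation ℝ R R → Derivation ℝ R R)
    (h_nabla_addl : ∀ X X' Y, nabla (X + X') Y = nabla X Y + nabla X' Y)
    (h_nabla_smull : ∀ (a : R) X Y, nabla (a • X) Y = a • nabla X Y)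
    (h_nabla_addr : ∀ X Y Y', nabla X (Y + Y') = nabla X Y + nabla X Y')
    (h_nabla_leib : ∀ (a : R) X Y, nabla X (a • Y) = X a • Y + a • nabla X Y)
    (h_nabla_tf : ∀ X Y, nabla X Y - nabla Y X = ⁅X, Y⁆)
    (h_nabla_flat : ∀ X Y Z, nabla X (nabla Y Z) - nabla Y (nabla X Z) = nabla ⁅X, Y⁆ Z)
    (n : ℕ) (hn : 3 ≤ n) (b : Module.Basis (Fin n) R (Derivation ℝ R R))
    (ω : Derivation ℝ R R →ₗ[R] R)
    (θ : Derivation ℝ R R → Derivation ℝ R R → Derivation ℝ R R)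
    (hθ : ∀ X Y, θ X Y = ω X • Y + ω Y • X) :
    (∀ X Y Z, dKV2 nabla θ X Y Z = 0) ↔ (∀ X Y, X (ω Y) - ω (nabla X Y) = 0) := by
  have key : ∀ X Y Z, dKV2 nabla θ X Y Z =
      (Y (ω X) - ω (nabla Y X)) • Z + (Y (ω Z) - ω (nabla Y Z)) • X
        - (X (ω Y) - ω (nabla X Y)) • Z - (X (ω Z) - ω (nabla X Z)) • Y := by
    intro X Y Z
    have h0 : θ X Y - θ Y X = 0 := by rw [hθ, hθ]; abel
    have hz : nabla (0 : Derivation ℝ R R) Z = 0 := by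
      have := h_nabla_smull 0 Z Z
      simpa using this
    rw [dKV2, h0, hz]
    simp only [hθ, h_nabla_addr, h_nabla_leib, map_add, map_smul, sub_smul, smul_eq_mul]
    module
  constructor
  · intro h
    set A : Derivation ℝ R R →ₗ[R] Derivation ℝ R R →ₗ[R] R :=
      LinearMap.mk₂ R (fun X Y => X (ω Y) - ω (nabla X Y))
        (by intro X X' Y; simp [h_nabla_addl, map_add]; ring)
        (by intro a X Y; simp [h_nabla_smull, map_smul, smul_eq_mul]; ring)
        (by intro X Y Y'; simp [h_nabla_addr, map_add]; ring)
        (by intro a X Y; simp [h_nabla_leib, Derivation.leibniz, map_add, map_smul,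
              smul_eq_mul]; ring) with hA
    have hAbasis : ∀ i j : Fin n, A (b i) (b j) = 0 := by
      intro i j
      obtain ⟨k, hki, hkj⟩ : ∃ k : Fin n, k ≠ i ∧ k ≠ j := by
        by_contra hc
        push_neg at hc
        have hsub : (Finset.univ : Finset (Fin n)) ⊆ {i, j} := by
          intro x _
          rcases eq_or_ne x i with rfl | hx
          · simp
          · simp [hc x hx]
        have h1 := Finset.card_le_card hsub
        have h2 : ({i, j} : Finset (Fin n)).card ≤ 2 := by
          apply le_trans (Finset.card_insert_le _ _)
          simp
        simp [Finset.card_univ] at h1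
        omega
      have heq := h (b i) (b k) (b j)
      rw [key] at heq
      have hrepr := congrArg (fun v => b.repr v k) heq
      simp only [map_add, map_sub, map_smul, Module.Basis.repr_self, Finsupp.coe_add,
        Finsupp.coe_sub, Finsupp.coe_smul, Pi.add_apply, Pi.sub_apply, Pi.smul_apply,
        Finsupp.single_apply, Finsupp.coe_zero, Pi.zero_apply, smul_eq_mul] at hrepr
      rw [if_neg (fun hh => hkj hh.symm), if_neg hki.symm] at hrepr
      simp only [if_true, mul_one, map_zero, Finsupp.coe_zero, Pi.zero_apply,
        neg_eq_zero, mul_zero, sub_zero, zero_add, zero_sub] at hrepr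
      simpa [hA] using hrepr
    have hA0 : A = 0 := by
      apply b.ext
      intro i
      apply b.ext
      intro j
      simpa using hAbasis i j
    intro X Y
    have : A X Y = 0 := by rw [hA0]; simp
    simpa [hA] using this
  · intro h X Y Z
    rw [key, h Y X, h Y Z, h X Y, h X Z]
    simp
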